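/- Let z ≥ 2 be real and let k be a positive integer with k ≤ (1/2)·log z. Then the infinite product over primes p > z of (1 − 2k/p)·(1 − 1/p)^{−2k} is bounded below by exp(−C·(log z)²/z) for some absolute constant C > 0, and bounded above by 1. -/
import Mathlib

open scoped BigOperators

private lemma aux_binom (n : ℕ) {b : ℝ} (hb0 : 0 ≤ b) (hb1 : b ≤ 1) :
    (1 - b) ^ n ≤ 1 - n * b + n * (n - 1) / 2 * b ^ 2 := by
  induction n with
  | zero => simp
  | succ n ih =>
    have h1 : 0 ≤ 1 - b := by linarith
    have hnn : (n : ℝ) ≤ (n : ℝ) ^ 2 := by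
      exact_mod_cast Nat.le_self_pow two_ne_zero n
    have hb3 : 0 ≤ b ^ 3 := pow_nonneg hb0 3
    calc (1 - b) ^ (n + 1) = (1 - b) ^ n * (1 - b) := pow_succ _ _
      _ ≤ (1 - (n : ℝ) * b + (n : ℝ) * ((n : ℝ) - 1) / 2 * b ^ 2) * (1 - b) :=
          mul_le_mul_of_nonneg_right ih h1
      _ ≤ 1 - ((n : ℕ) + 1 : ℕ) * b + ((n : ℕ) + 1 : ℕ) * (((n : ℕ) + 1 : ℕ) - 1) / 2 * b ^ 2 := by
          push_cast
          nlinarith [mul_nonneg (by nlinarith : (0:ℝ) ≤ (n:ℝ) * ((n:ℝ) - 1)) hb3]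

private lemma hasProd_le_nonneg {ι : Type*} {f g : ι → ℝ} {a b : ℝ}
    (h0 : ∀ i, 0 ≤ f i) (h : ∀ i, f i ≤ g i) (hf : HasProd f a) (hg : HasProd g b) : a ≤ b :=
  le_of_tendsto_of_tendsto' hf hg fun s =>
    Finset.prod_le_prod (fun i _ => h0 i) (fun i _ => h i)

set_option maxHeartbeats 1000000 in
private lemma key_pointwise {P lz : ℝ} {k : ℕ} (hk : 1 ≤ k) (h2k : 2 * (k:ℝ) ≤ lz)
    (hP : 2 * lz < P) :
    Real.exp (-(2 * lz ^ 2) * (P ^ 2)⁻¹) ≤ (1 - 2 * (k:ℝ) / P) * ((1 - 1 / P) ^ (2 * k))⁻¹ ∧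
    (1 - 2 * (k:ℝ) / P) * ((1 - 1 / P) ^ (2 * k))⁻¹ ≤ 1 ∧
    0 ≤ (1 - 2 * (k:ℝ) / P) * ((1 - 1 / P) ^ (2 * k))⁻¹ := by
  have hk1 : (1:ℝ) ≤ (k:ℝ) := by exact_mod_cast hk
  have hlz2 : (2:ℝ) ≤ lz := by linarith
  have hP4 : (4:ℝ) < P := by linarith
  have hP0 : (0:ℝ) < P := by linarith
  have hP2 : (0:ℝ) < P ^ 2 := by positivity
  have hb0 : (0:ℝ) ≤ 1 / P := by positivity
  have hb1 : 1 / P ≤ 1 := by rw [div_le_one hP0]; linarith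
  have hbP : 1 / P < 1 := by rw [div_lt_one hP0]; linarith
  have ha : 2 * (k:ℝ) / P < 1 / 2 := by
    rw [div_lt_div_iff₀ hP0 (by norm_num)]
    nlinarith
  have ha0 : 0 < 2 * (k:ℝ) / P := by positivity
  have ha1 : (0:ℝ) < 1 - 2 * (k:ℝ) / P := by linarith
  set D : ℝ := ((1:ℝ) - 1 / P) ^ (2 * k) with hD
  have hDpos : 0 < D := pow_pos (by linarith) _
  -- Bernoulli lower bound : 1 - 2k/P ≤ D
  have hbern : 1 - 2 * (k:ℝ) / P ≤ D := by
    have h := one_add_mul_le_pow (a := -(1/P)) (by linarith) (2 * k)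
    have h2 : 1 + ((2 * k : ℕ) : ℝ) * (-(1/P)) = 1 - 2 * (k:ℝ) / P := by
      push_cast; ring
    rw [h2] at h
    calc 1 - 2 * (k:ℝ) / P ≤ (1 + -(1/P)) ^ (2*k) := h
      _ = D := by rw [hD]; ring_nf
  have hF1 : (1 - 2 * (k:ℝ) / P) * D⁻¹ ≤ 1 := by
    rw [mul_inv_le_iff₀ hDpos, one_mul]
    exact hbern
  have hF0 : 0 ≤ (1 - 2 * (k:ℝ) / P) * D⁻¹ := by positivity
  refine ⟨?_, hF1, hF0⟩
  -- binomial upper bound on D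
  have hbinom : D ≤ 1 - 2 * (k:ℝ) / P + 2 * (k:ℝ)^2 / P^2 := by
    have h := aux_binom (2 * k) hb0 hb1
    have hcast : ((2 * k : ℕ) : ℝ) = 2 * (k:ℝ) := by push_cast; ring
    rw [hcast] at h
    have hq : ((k:ℝ) * (2 * (k:ℝ) - 1)) / P^2 ≤ 2 * (k:ℝ)^2 / P^2 := by
      rw [div_le_div_iff_of_pos_right hP2]
      nlinarith
    calc D ≤ 1 - 2 * (k:ℝ) * (1/P) + 2 * (k:ℝ) * (2 * (k:ℝ) - 1) / 2 * (1/P) ^ 2 := h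
      _ = 1 - 2 * (k:ℝ) / P + ((k:ℝ) * (2 * (k:ℝ) - 1)) / P^2 := by ring
      _ ≤ 1 - 2 * (k:ℝ) / P + 2 * (k:ℝ)^2 / P^2 := by linarith
  -- abbreviations
  set a : ℝ := 2 * (k:ℝ) / P with hadef
  set c : ℝ := 2 * (k:ℝ)^2 / P^2 with hcdef
  have hc0 : 0 < c := by rw [hcdef]; positivity
  have hac : 0 < 1 - a + c := by linarith
  -- 1 - 2c ≤ (1-a)/(1-a+c)
  have hstep1 : (1 - 2*c) * (1 - a + c) ≤ 1 - a := by nlinarith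
  have hstep2 : 1 - 2*c ≤ (1 - a) * (1 - a + c)⁻¹ := by
    rw [← div_eq_mul_inv, le_div_iff₀ hac]
    exact hstep1
  have hstep3 : (1 - a) * (1 - a + c)⁻¹ ≤ (1 - a) * D⁻¹ :=
    mul_le_mul_of_nonneg_left (inv_anti₀ hDpos hbinom) ha1.le
  -- 2c ≤ u where u = lz^2/P^2
  have hcu : 2 * c ≤ lz^2 / P^2 := by
    have h4k : 4 * (k:ℝ)^2 ≤ lz^2 := by nlinarith
    have : 2 * c = 4 * (k:ℝ)^2 / P^2 := by rw [hcdef]; ring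
    rw [this, div_le_div_iff_of_pos_right hP2]
    exact h4k
  set u : ℝ := lz^2 / P^2 with hudef
  have hu0 : 0 ≤ u := by rw [hudef]; positivity
  have hu2 : u ≤ 1 / 2 := by
    rw [hudef, div_le_div_iff₀ hP2 (by norm_num)]
    nlinarith
  -- exp(-2u) ≤ 1 - u
  have hexp : Real.exp (-(2*u)) ≤ 1 - u := by
    have h1 : 1 + 2*u ≤ Real.exp (2*u) := by
      linarith [Real.add_one_le_exp (2*u)]
    have hppos : (0:ℝ) < 1 + 2*u := by linarith
    calc Real.exp (-(2*u)) = (Real.exp (2*u))⁻¹ := Real.exp_neg _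
      _ ≤ (1 + 2*u)⁻¹ := inv_anti₀ hppos h1
      _ ≤ 1 - u := by
          rw [inv_le_iff_one_le_mul₀ hppos]
          nlinarith
  have hspu : -(2 * lz ^ 2) * (P ^ 2)⁻¹ = -(2*u) := by
    rw [hudef]; field_simp
  rw [hspu]
  calc Real.exp (-(2*u)) ≤ 1 - u := hexp
    _ ≤ 1 - 2*c := by linarith
    _ ≤ (1 - a) * (1 - a + c)⁻¹ := hstep2
    _ ≤ (1 - a) * D⁻¹ := hstep3

/-- For `z ≥ 2` and a positive integer `k ≤ (1/2) log z`, the product over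
primes `p > z` of `(1 - 2k/p)(1 - 1/p)^{-2k}` is bounded below by `exp(-C (log z)²/z)` for
an absolute constant `C > 0`, and bounded above by `1`. -/
theorem stmt_10 :
    ∃ C : ℝ, 0 < C ∧ ∀ (z : ℝ) (k : ℕ), 2 ≤ z → 1 ≤ k → (k : ℝ) ≤ Real.log z / 2 →
      Real.exp (-C * (Real.log z) ^ 2 / z) ≤
        (∏' p : {p : ℕ // p.Prime ∧ z < (p : ℝ)},
          (1 - 2 * (k : ℝ) / (p : ℕ)) * ((1 : ℝ) - 1 / (p : ℕ)) ^ (-(2 * k : ℤ))) ∧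
      (∏' p : {p : ℕ // p.Prime ∧ z < (p : ℝ)},
          (1 - 2 * (k : ℝ) / (p : ℕ)) * ((1 : ℝ) - 1 / (p : ℕ)) ^ (-(2 * k : ℤ))) ≤ 1 := by
  refine ⟨4, by norm_num, ?_⟩
  intro z k hz hk hk2
  have hz0 : (0:ℝ) < z := by linarith
  have hlz : 0 < Real.log z := Real.log_pos (by linarith)
  -- log z ≤ z / 2
  have hsq : Real.sqrt z ^ 2 = z := Real.sq_sqrt hz0.le
  have hsqpos : 0 < Real.sqrt z := Real.sqrt_pos.mpr hz0
  have hlogz : Real.log z ≤ z / 2 := by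
    have h1 : Real.log (Real.sqrt z) ≤ Real.sqrt z - 1 :=
      Real.log_le_sub_one_of_pos hsqpos
    have h2 : Real.log (Real.sqrt z) = Real.log z / 2 := Real.log_sqrt hz0.le
    nlinarith [sq_nonneg (Real.sqrt z - 2)]
  set L : ℝ := (Real.log z) ^ 2 with hL
  set F : {p : ℕ // p.Prime ∧ z < (p : ℝ)} → ℝ := fun p =>
    (1 - 2 * (k : ℝ) / (p : ℕ)) * ((1 : ℝ) - 1 / (p : ℕ)) ^ (-(2 * k : ℤ)) with hF
  set s : {p : ℕ // p.Prime ∧ z < (p : ℝ)} → ℝ := fun p =>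
    -(2 * L) * ((((p : ℕ) : ℝ)) ^ 2)⁻¹ with hs
  -- rewrite zpow
  have hzpow : ∀ p : {p : ℕ // p.Prime ∧ z < (p : ℝ)},
      ((1 : ℝ) - 1 / (p : ℕ)) ^ (-(2 * k : ℤ))
      = (((1:ℝ) - 1 / ((p : ℕ) : ℝ)) ^ (2 * k))⁻¹ := by
    intro p
    have h : (-(2 * (k:ℤ))) = -((2 * k : ℕ) : ℤ) := by push_cast; ring
    rw [h, zpow_neg, zpow_natCast]
  -- pointwise bounds
  have key : ∀ p : {p : ℕ // p.Prime ∧ z < (p : ℝ)},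
      Real.exp (s p) ≤ F p ∧ F p ≤ 1 ∧ 0 ≤ F p := by
    intro p
    have h2k : 2 * (k:ℝ) ≤ Real.log z := by linarith
    have hP : 2 * Real.log z < ((p : ℕ) : ℝ) := by
      have := p.2.2
      linarith
    have h := key_pointwise hk h2k hP
    have hFp : F p = (1 - 2 * (k:ℝ) / ((p:ℕ):ℝ)) * (((1:ℝ) - 1 / ((p:ℕ):ℝ)) ^ (2 * k))⁻¹ := by
      rw [hF]
      simp only [hzpow p]
    have hsp : s p = -(2 * L) * ((((p:ℕ):ℝ)) ^ 2)⁻¹ := rfl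
    rw [hFp, hsp, hL]
    exact h
  -- summability of s
  have hsub : Summable (fun p : {p : ℕ // p.Prime ∧ z < (p : ℝ)} => ((((p:ℕ):ℝ)) ^ 2)⁻¹) := by
    have h1 : Summable (fun n : ℕ => ((n:ℝ) ^ 2)⁻¹) :=
      Real.summable_nat_pow_inv.mpr one_lt_two
    exact h1.subtype _
  have hsummable : Summable s := hsub.mul_left _
  -- tail sum bound
  have hT : (∑' p : {p : ℕ // p.Prime ∧ z < (p : ℝ)}, ((((p:ℕ):ℝ)) ^ 2)⁻¹) ≤ 2 / z := by
    apply Summable.tsum_le_of_sum_le hsub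
    intro t
    set m := Nat.floor z with hm
    have hzm1 : z ≤ (m:ℝ) + 1 := (Nat.lt_floor_add_one z).le
    set N := (t.image (fun p : {p : ℕ // p.Prime ∧ z < (p : ℝ)} => (p:ℕ))).sup id + 1 with hN
    have himg : (t.image (fun p : {p : ℕ // p.Prime ∧ z < (p : ℝ)} => (p:ℕ)))
        ⊆ Finset.Ioo m N := by
      intro n hn
      rw [Finset.mem_Ioo]
      constructor
      · simp only [Finset.mem_image] at hn
        obtain ⟨q, hq, rfl⟩ := hn
        exact (Nat.floor_lt hz0.le).mpr q.2.2
      · exact Nat.lt_succ_of_le (Finset.le_sup (f := id) hn)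
    calc ∑ p ∈ t, ((((p:ℕ):ℝ)) ^ 2)⁻¹
        = ∑ n ∈ t.image (fun p : {p : ℕ // p.Prime ∧ z < (p : ℝ)} => (p:ℕ)), ((n:ℝ) ^ 2)⁻¹ := by
          rw [Finset.sum_image]
          intro x hx y hy hxy
          exact Subtype.ext hxy
      _ ≤ ∑ n ∈ Finset.Ioo m N, ((n:ℝ) ^ 2)⁻¹ :=
          Finset.sum_le_sum_of_subset_of_nonneg himg (fun i _ _ => by positivity)
      _ ≤ 2 / ((m:ℝ) + 1) := sum_Ioo_inv_sq_le m N
      _ ≤ 2 / z := by gcongr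
  by_cases hmult : Multipliable F
  · have hS : HasSum s (∑' p, s p) := hsummable.hasSum
    have hprodexp : HasProd (fun p => Real.exp (s p)) (Real.exp (∑' p, s p)) := hS.rexp
    constructor
    · refine le_trans ?_ (hasProd_le_nonneg (fun p => (Real.exp_pos _).le)
        (fun p => (key p).1) hprodexp hmult.hasProd)
      rw [Real.exp_le_exp]
      have htsum : (∑' p, s p)
          = -(2*L) * (∑' p : {p : ℕ // p.Prime ∧ z < (p : ℝ)}, ((((p:ℕ):ℝ)) ^ 2)⁻¹) :=
        tsum_mul_left
      rw [htsum]
      have hL0 : (0:ℝ) ≤ 2 * L := by positivity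
      have hmul := mul_le_mul_of_nonneg_left hT hL0
      have heq : -4 * L / z = -((2*L) * (2/z)) := by ring
      linarith
    · exact hasProd_le_nonneg (fun p => (key p).2.2) (fun p => (key p).2.1)
        hmult.hasProd hasProd_one
  · rw [tprod_eq_one_of_not_multipliable hmult]
    refine ⟨?_, le_refl _⟩
    rw [← Real.exp_zero]
    apply Real.exp_le_exp.mpr
    have hL0 : (0:ℝ) ≤ L := by positivity
    have : -4 * L ≤ 0 := by linarith
    exact div_nonpos_of_nonpos_of_nonneg this hz0.le
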